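/- Let K be a C-pseudo-cone, φ(v) = −log ρ_K(v), and c(v,u) = log|⟨v,u⟩|. Then for (v,u) ∈ Ω_C × Ω_{C°}: (v,u) ∈ ∂^c φ if and only if (v,u) ∈ ∂•K; i.e., c(v,u) − φ(v) ≤ c(w,u) − φ(w) for all w ∈ Ω_C if and only if u is an outer normal vector of K at ρ_K(v)v. -/

import Mathlib

open Set Metric MeasureTheory
open scoped InnerProductSpace Pointwise

noncomputable section

abbrev E (n : ℕ) := EuclideanSpace ℝ (Fin n)

/-- The dual cone `C° = {x : ⟪x,y⟫ ≤ 0 ∀ y ∈ C}`. -/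
def dualCone {n : ℕ} (C : Set (E n)) : Set (E n) := {x | ∀ y ∈ C, ⟪x, y⟫_ℝ ≤ 0}

/-- `Ω_C = S^{n-1} ∩ int C`. -/
def OmegaC {n : ℕ} (C : Set (E n)) : Set (E n) := sphere (0 : E n) 1 ∩ interior C

/-- `Ω_{C°} = S^{n-1} ∩ int C°`. -/
def OmegaCp {n : ℕ} (C : Set (E n)) : Set (E n) := sphere (0 : E n) 1 ∩ interior (dualCone C)

/-- `C` is a closed convex pointed cone with nonempty interior. -/
structure IsPointedCone {n : ℕ} (C : Set (E n)) : Prop where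
  closed : IsClosed C
  convex : Convex ℝ C
  cone : ∀ r : ℝ, 0 ≤ r → ∀ x ∈ C, r • x ∈ C
  pointed : C ∩ (-C) = {(0 : E n)}
  intNonempty : (interior C).Nonempty

/-- `K` is a `C`-pseudo-cone: nonempty, closed, convex, `0 ∉ K`, `K + C = K ⊆ C`. -/
def IsPseudoCone {n : ℕ} (C K : Set (E n)) : Prop :=
  K.Nonempty ∧ IsClosed K ∧ Convex ℝ K ∧ (0 : E n) ∉ K ∧ K + C = K ∧ K ⊆ C

/-- The support function `h_K(u) = sup {⟪u,y⟫ : y ∈ K}`. -/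
def suppFn {n : ℕ} (K : Set (E n)) (u : E n) : ℝ := sSup ((fun y => ⟪u, y⟫_ℝ) '' K)

/-- The radial function `ρ_K(v) = min {r > 0 : r v ∈ K}`. -/
def radialFn {n : ℕ} (K : Set (E n)) (v : E n) : ℝ := sInf {r : ℝ | 0 < r ∧ r • v ∈ K}

/-- `u` is an outer normal vector of `K` at `x`. -/
def IsNormalAt {n : ℕ} (K : Set (E n)) (u x : E n) : Prop :=
  x ∈ K ∧ ∀ y ∈ K, ⟪u, y⟫_ℝ ≤ ⟪u, x⟫_ℝ

/-- The pseudo-subdifferential `∂•K`. -/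
def pseudoSubdiff {n : ℕ} (C K : Set (E n)) : Set (E n × E n) :=
  {p | p.1 ∈ OmegaC C ∧ p.2 ∈ OmegaCp C ∧ IsNormalAt K p.2 (radialFn K p.1 • p.1)}

/-! ### Auxiliary lemmas -/

/-- Strict negativity of inner product with interior dual points. -/
lemma aux_inner_neg {n : ℕ} {C : Set (E n)} {u w : E n}
    (hu : u ∈ interior (dualCone C)) (hw : w ∈ C) (hw0 : w ≠ 0) : ⟪u, w⟫_ℝ < 0 := by
  obtain ⟨ε, hε, hball⟩ := Metric.mem_nhds_iff.mp (mem_interior_iff_mem_nhds.mp hu)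
  have hwn : (0:ℝ) < ‖w‖ := norm_pos_iff.mpr hw0
  set u' : E n := u + (ε / (2 * ‖w‖)) • w with hu'
  have hmem : u' ∈ dualCone C := by
    apply hball
    simp only [hu', mem_ball, dist_self_add_left, norm_smul, Real.norm_eq_abs]
    rw [abs_of_pos (by positivity)]
    rw [div_mul_eq_mul_div, mul_comm]
    calc ‖w‖ * ε / (2 * ‖w‖) = ε / 2 := by field_simp
    _ < ε := by linarith
  have := hmem w hw
  rw [hu', inner_add_left, real_inner_smul_left, real_inner_self_eq_norm_sq] at this
  have hpos : 0 < ε / (2 * ‖w‖) * ‖w‖ ^ 2 := by positivity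
  linarith

/-- Elements of `K` are norm-bounded below. -/
lemma aux_norm_lb {n : ℕ} {C K : Set (E n)} (hK : IsPseudoCone C K) :
    ∃ ε > (0:ℝ), ∀ y ∈ K, ε ≤ ‖y‖ := by
  obtain ⟨-, hcl, -, h0, -, -⟩ := hK
  obtain ⟨ε, hε, hball⟩ := Metric.mem_nhds_iff.mp (hcl.isOpen_compl.mem_nhds h0)
  exact ⟨ε, hε, fun y hy => by
    by_contra h
    exact (hball (by simpa [mem_ball, dist_zero_right] using not_le.mp h)) hy⟩

lemma aux_add_mem {n : ℕ} {C : Set (E n)} (hC : IsPointedCone C) {a b : E n}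
    (ha : a ∈ C) (hb : b ∈ C) : a + b ∈ C := by
  have := hC.convex ha hb (by norm_num : (0:ℝ) ≤ 1/2) (by norm_num : (0:ℝ) ≤ 1/2) (by norm_num)
  have h2 := hC.cone 2 (by norm_num) _ this
  convert h2 using 1
  rw [smul_add, smul_smul, smul_smul]
  norm_num

lemma aux_K_add {n : ℕ} {C K : Set (E n)} (hK : IsPseudoCone C K) {y c : E n}
    (hy : y ∈ K) (hc : c ∈ C) : y + c ∈ K := by
  rw [← hK.2.2.2.2.1]
  exact Set.add_mem_add hy hc

/-- Scaling preserves interior of the cone. -/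
lemma aux_smul_interior {n : ℕ} {C : Set (E n)} (hC : IsPointedCone C) {t : ℝ} (ht : 0 < t)
    {z : E n} (hz : z ∈ interior C) : t • z ∈ interior C := by
  obtain ⟨δ, hδ, hball⟩ := Metric.mem_nhds_iff.mp (mem_interior_iff_mem_nhds.mp hz)
  refine mem_interior.mpr ⟨ball (t • z) (t * δ), fun x hx => ?_, isOpen_ball,
    mem_ball_self (by positivity)⟩
  have : t⁻¹ • x ∈ ball z δ := by
    rw [mem_ball] at hx ⊢
    rw [dist_eq_norm] at hx ⊢
    have : t⁻¹ • x - z = t⁻¹ • (x - t • z) := by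
      rw [smul_sub, smul_smul, inv_mul_cancel₀ ht.ne', one_smul]
    rw [this, norm_smul, Real.norm_eq_abs, abs_of_pos (by positivity : (0:ℝ) < t⁻¹)]
    calc t⁻¹ * ‖x - t • z‖ < t⁻¹ * (t * δ) := by
          exact mul_lt_mul_of_pos_left hx (by positivity)
      _ = δ := by field_simp
  have hmem := hball this
  have := hC.cone t ht.le _ hmem
  rwa [smul_smul, mul_inv_cancel₀ ht.ne', one_smul] at this

/-- Adding an interior point stays in the interior. -/
lemma aux_add_interior {n : ℕ} {C : Set (E n)} (hC : IsPointedCone C) {y z : E n}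
    (hy : y ∈ C) (hz : z ∈ interior C) : y + z ∈ interior C := by
  obtain ⟨δ, hδ, hball⟩ := Metric.mem_nhds_iff.mp (mem_interior_iff_mem_nhds.mp hz)
  refine mem_interior.mpr ⟨ball (y + z) δ, fun x hx => ?_, isOpen_ball, mem_ball_self hδ⟩
  have : x - y ∈ ball z δ := by
    rw [mem_ball, dist_eq_norm] at hx ⊢
    convert hx using 2
    abel
  have := hball this
  have := aux_add_mem hC hy this
  simpa using this

/-- Key structure of the radial function. -/
lemma aux_radial {n : ℕ} {C K : Set (E n)} (hC : IsPointedCone C) (hK : IsPseudoCone C K)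
    {v : E n} (hv : v ∈ OmegaC C) :
    0 < radialFn K v ∧ radialFn K v • v ∈ K ∧ ∀ r : ℝ, 0 < r → r • v ∈ K → radialFn K v ≤ r := by
  obtain ⟨hvs, hvi⟩ := hv
  have hvn : ‖v‖ = 1 := mem_sphere_zero_iff_norm.mp hvs
  obtain ⟨ε, hε, hlb⟩ := aux_norm_lb hK
  set S : Set ℝ := {r : ℝ | 0 < r ∧ r • v ∈ K} with hS
  have hsub : S = {r : ℝ | ε ≤ r ∧ r • v ∈ K} := by
    ext r
    simp only [hS, mem_setOf_eq]
    constructor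
    · rintro ⟨hr, hrv⟩
      refine ⟨?_, hrv⟩
      have := hlb _ hrv
      rwa [norm_smul, Real.norm_eq_abs, hvn, mul_one, abs_of_pos hr] at this
    · rintro ⟨hr, hrv⟩
      exact ⟨lt_of_lt_of_le hε hr, hrv⟩
  have hbdd : BddBelow S := by
    rw [hsub]; exact ⟨ε, fun r hr => hr.1⟩
  have hne : S.Nonempty := by
    obtain ⟨y0, hy0⟩ := hK.1
    obtain ⟨δ, hδ, hball⟩ := Metric.mem_nhds_iff.mp (mem_interior_iff_mem_nhds.mp hvi)
    set r : ℝ := ‖y0‖ / δ + 1 with hr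
    have hr0 : 0 < r := by positivity
    refine ⟨r, hr0, ?_⟩
    have h1 : v - r⁻¹ • y0 ∈ ball v δ := by
      rw [mem_ball, dist_eq_norm]
      have : v - r⁻¹ • y0 - v = -(r⁻¹ • y0) := by abel
      rw [this, norm_neg, norm_smul, Real.norm_eq_abs, abs_of_pos (by positivity)]
      rw [inv_mul_eq_div, div_lt_iff₀ hr0, hr]
      have : ‖y0‖ / δ * δ = ‖y0‖ := by field_simp
      nlinarith [norm_nonneg y0]
    have h2 : r • (v - r⁻¹ • y0) ∈ C := hC.cone r hr0.le _ (hball h1)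
    have h3 : r • v - y0 ∈ C := by
      rwa [smul_sub, smul_smul, mul_inv_cancel₀ hr0.ne', one_smul] at h2
    have := aux_K_add hK hy0 h3
    convert this using 1
    abel
  have hclosed : IsClosed S := by
    rw [hsub]
    have : {r : ℝ | ε ≤ r ∧ r • v ∈ K} = Ici ε ∩ (fun r : ℝ => r • v) ⁻¹' K := rfl
    rw [this]
    exact isClosed_Ici.inter (hK.2.1.preimage (by continuity))
  have hmem : sInf S ∈ S := hclosed.csInf_mem hne hbdd
  exact ⟨hmem.1, hmem.2, fun r hr hrv => csInf_le hbdd ⟨hr, hrv⟩⟩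

/-- for `φ(v) = -log ρ_K(v)` and `c(v,u) = log |⟪v,u⟫|`,
`(v,u) ∈ ∂^c φ` iff `(v,u) ∈ ∂•K`. -/
theorem stmt16 {n : ℕ} (C K : Set (E n)) (hC : IsPointedCone C) (hK : IsPseudoCone C K)
    (v u : E n) (hv : v ∈ OmegaC C) (hu : u ∈ OmegaCp C) :
    (∀ w ∈ OmegaC C,
        Real.log |⟪v, u⟫_ℝ| - (-Real.log (radialFn K v)) ≤
          Real.log |⟪w, u⟫_ℝ| - (-Real.log (radialFn K w))) ↔
      IsNormalAt K u (radialFn K v • v) := by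
  obtain ⟨hus, hui⟩ := hu
  -- basic facts
  have vC : v ∈ C := interior_subset hv.2
  have v0 : v ≠ 0 := by
    intro h
    rw [h] at hv
    simpa using mem_sphere_zero_iff_norm.mp hv.1
  have huv : ⟪u, v⟫_ℝ < 0 := aux_inner_neg hui vC v0
  obtain ⟨ρv, ρvK, ρvmin⟩ := aux_radial hC hK hv
  -- the equivalent multiplicative form of the log inequality for a single w
  have key : ∀ w ∈ OmegaC C,
      (Real.log |⟪v, u⟫_ℝ| - (-Real.log (radialFn K v)) ≤
          Real.log |⟪w, u⟫_ℝ| - (-Real.log (radialFn K w))) ↔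
      ⟪u, radialFn K w • w⟫_ℝ ≤ ⟪u, radialFn K v • v⟫_ℝ := by
    intro w hw
    have wC : w ∈ C := interior_subset hw.2
    have w0 : w ≠ 0 := by
      intro h
      rw [h] at hw
      simpa using mem_sphere_zero_iff_norm.mp hw.1
    have huw : ⟪u, w⟫_ℝ < 0 := aux_inner_neg hui wC w0
    obtain ⟨ρw, ρwK, ρwmin⟩ := aux_radial hC hK hw
    have havu : |⟪v, u⟫_ℝ| = -⟪u, v⟫_ℝ := by rw [real_inner_comm]; exact abs_of_neg huv
    have hawu : |⟪w, u⟫_ℝ| = -⟪u, w⟫_ℝ := by rw [real_inner_comm]; exact abs_of_neg huw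
    rw [sub_neg_eq_add, sub_neg_eq_add, havu, hawu,
      ← Real.log_mul (by linarith) (by linarith), ← Real.log_mul (by linarith) (by linarith),
      Real.log_le_log_iff (by nlinarith) (by nlinarith)]
    rw [real_inner_smul_right, real_inner_smul_right]
    constructor
    · intro h; nlinarith
    · intro h; nlinarith
  constructor
  · -- forward
    intro h
    refine ⟨ρvK, fun y hy => ?_⟩
    obtain ⟨z, hz⟩ := hC.intNonempty
    -- for every t > 0, ⟪u, y + t z⟫ ≤ ⟪u, ρv • v⟫
    have main : ∀ t : ℝ, 0 < t → ⟪u, y + t • z⟫_ℝ ≤ ⟪u, radialFn K v • v⟫_ℝ := by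
      intro t ht
      set yt : E n := y + t • z with hyt
      have hzt : t • z ∈ interior C := aux_smul_interior hC ht hz
      have hytK : yt ∈ K := aux_K_add hK hy (interior_subset hzt)
      have hytint : yt ∈ interior C := aux_add_interior hC (hK.2.2.2.2.2 hy) hzt
      obtain ⟨ε, hε, hlb⟩ := aux_norm_lb hK
      have hytn : 0 < ‖yt‖ := lt_of_lt_of_le hε (hlb _ hytK)
      obtain ⟨w, hwdef⟩ : ∃ w : E n, w = ‖yt‖⁻¹ • yt := ⟨_, rfl⟩
      have hwΩ : w ∈ OmegaC C := by
        constructor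
        · rw [mem_sphere_zero_iff_norm, hwdef, norm_smul, Real.norm_eq_abs,
            abs_of_pos (inv_pos.mpr hytn), inv_mul_cancel₀ hytn.ne']
        · rw [hwdef]; exact aux_smul_interior hC (inv_pos.mpr hytn) hytint
      obtain ⟨ρw, ρwK, ρwmin⟩ := aux_radial hC hK hwΩ
      have hinK : ‖yt‖ • w = yt := by
        rw [hwdef, smul_smul, mul_inv_cancel₀ hytn.ne', one_smul]
      have hle : radialFn K w ≤ ‖yt‖ := ρwmin _ hytn (by rwa [hinK])
      have wC : w ∈ C := interior_subset hwΩ.2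
      have w0 : w ≠ 0 := by
        intro h0
        have := mem_sphere_zero_iff_norm.mp hwΩ.1
        rw [h0] at this; simp at this
      have huw : ⟪u, w⟫_ℝ < 0 := aux_inner_neg hui wC w0
      have h1 : ⟪u, yt⟫_ℝ ≤ ⟪u, radialFn K w • w⟫_ℝ := by
        have hIP : ⟪u, yt⟫_ℝ = ‖yt‖ * ⟪u, w⟫_ℝ := by
          conv_lhs => rw [← hinK]
          rw [real_inner_smul_right]
        rw [hIP, real_inner_smul_right]
        nlinarith [mul_nonneg (sub_nonneg.mpr hle) (neg_nonneg.mpr huw.le)]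
      have h2 := (key w hwΩ).mp (h w hwΩ)
      linarith
    -- take the limit t → 0
    refine le_of_forall_pos_le_add fun δ hδ => ?_
    have hiz : |⟪u, z⟫_ℝ| + 1 > 0 := by positivity
    set t : ℝ := δ / (|⟪u, z⟫_ℝ| + 1) with htdef
    have ht : 0 < t := by positivity
    have := main t ht
    rw [inner_add_right, real_inner_smul_right] at this
    have habs : -(t * ⟪u, z⟫_ℝ) ≤ t * (|⟪u, z⟫_ℝ| + 1) := by
      have h1 : -⟪u, z⟫_ℝ ≤ |⟪u, z⟫_ℝ| + 1 := by
        have := neg_abs_le ⟪u, z⟫_ℝ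
        linarith
      nlinarith
    have hteq : t * (|⟪u, z⟫_ℝ| + 1) = δ := by
      rw [htdef]; field_simp
    linarith
  · -- backward
    rintro ⟨hxK, hnorm⟩ w hw
    obtain ⟨ρw, ρwK, ρwmin⟩ := aux_radial hC hK hw
    exact (key w hw).mpr (hnorm _ ρwK)
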